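/- Let A be a positive bounded operator on a complex Hilbert space H with semi-inner product ⟨x,y⟩_A = ⟨Ax,y⟩ and seminorm ‖·‖_A. Then for all a, b, e ∈ H with ‖e‖_A = 1, |⟨a,e⟩_A · ⟨e,b⟩_A| ≤ (1/2)·(|⟨a,b⟩_A| + ‖a‖_A·‖b‖_A). -/

import Mathlib

open scoped InnerProductSpace
noncomputable section
set_option synthInstance.maxHeartbeats 1000000
set_option maxHeartbeats 1000000

private lemma buzano_core {F : Type*} [AddCommGroup F] [Module ℂ F]
    [c : PreInnerProductSpace.Core ℂ F] (a b e : F)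
    (he : RCLike.re (@inner ℂ F c.toInner e e) = 1) :
    ‖@inner ℂ F c.toInner a e * @inner ℂ F c.toInner e b‖ ≤
      (1 / 2) * (‖@inner ℂ F c.toInner a b‖ +
        Real.sqrt (RCLike.re (@inner ℂ F c.toInner a a)) *
          Real.sqrt (RCLike.re (@inner ℂ F c.toInner b b))) := by
  letI : Inner ℂ F := c.toInner
  set α : ℂ := @inner ℂ F c.toInner a e with hα
  set x : F := (2 * starRingEnd ℂ α) • e - a with hx
  have hee : @inner ℂ F c.toInner e e = 1 := by
    have him := InnerProductSpace.Core.inner_self_im (𝕜 := ℂ) e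
    apply Complex.ext
    · simpa using he
    · simpa using him
  have hea : @inner ℂ F c.toInner e a = starRingEnd ℂ α := (InnerProductSpace.Core.inner_conj_symm (𝕜 := ℂ) e a).symm
  have hxb : @inner ℂ F c.toInner x b
      = 2 * α * @inner ℂ F c.toInner e b - @inner ℂ F c.toInner a b := by
    rw [hx, InnerProductSpace.Core.inner_sub_left (𝕜 := ℂ), InnerProductSpace.Core.inner_smul_left (𝕜 := ℂ)]
    simp only [map_mul, Complex.conj_conj, map_ofNat]
  have hxx : @inner ℂ F c.toInner x x = @inner ℂ F c.toInner a a := by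
    rw [hx]
    simp only [InnerProductSpace.Core.inner_sub_left (𝕜 := ℂ), InnerProductSpace.Core.inner_sub_right (𝕜 := ℂ),
      InnerProductSpace.Core.inner_smul_left (𝕜 := ℂ), InnerProductSpace.Core.inner_smul_right (𝕜 := ℂ), hee, hea, map_mul,
      Complex.conj_conj, map_ofNat]
    ring
  have hcs := InnerProductSpace.Core.inner_mul_inner_self_le (𝕜 := ℂ) x b
  rw [← InnerProductSpace.Core.norm_inner_symm (𝕜 := ℂ) x b, hxx] at hcs
  have haa : (0 : ℝ) ≤ RCLike.re (@inner ℂ F c.toInner a a) := InnerProductSpace.Core.inner_self_nonneg (𝕜 := ℂ)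
  have hbb : (0 : ℝ) ≤ RCLike.re (@inner ℂ F c.toInner b b) := InnerProductSpace.Core.inner_self_nonneg (𝕜 := ℂ)
  have h1 : ‖@inner ℂ F c.toInner x b‖ ≤
      Real.sqrt (RCLike.re (@inner ℂ F c.toInner a a)) *
        Real.sqrt (RCLike.re (@inner ℂ F c.toInner b b)) := by
    have h := Real.sqrt_le_sqrt hcs
    rwa [Real.sqrt_mul_self (norm_nonneg _), Real.sqrt_mul haa] at h
  have h2 : 2 * ‖α * @inner ℂ F c.toInner e b‖ ≤
      ‖@inner ℂ F c.toInner x b‖ + ‖@inner ℂ F c.toInner a b‖ := by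
    have : (2 : ℂ) * α * @inner ℂ F c.toInner e b
        = @inner ℂ F c.toInner x b + @inner ℂ F c.toInner a b := by
      rw [hxb]; ring
    calc 2 * ‖α * @inner ℂ F c.toInner e b‖
        = ‖(2 : ℂ) * α * @inner ℂ F c.toInner e b‖ := by
          rw [mul_assoc, norm_mul]; norm_num
      _ = ‖@inner ℂ F c.toInner x b + @inner ℂ F c.toInner a b‖ := by rw [this]
      _ ≤ _ := norm_add_le _ _
  linarith

theorem semi_buzano_inequality {H : Type*} [NormedAddCommGroup H] [InnerProductSpace ℂ H]
    [CompleteSpace H] (A : H →L[ℂ] H) (hA : A.IsPositive) (a b e : H)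
    (he : Real.sqrt ((⟪A e, e⟫_ℂ).re) = 1) :
    ‖(⟪A a, e⟫_ℂ) * (⟪A e, b⟫_ℂ)‖ ≤
      (1 / 2) * (‖(⟪A a, b⟫_ℂ)‖ +
        Real.sqrt ((⟪A a, a⟫_ℂ).re) * Real.sqrt ((⟪A b, b⟫_ℂ).re)) := by
  have hadj : ContinuousLinearMap.adjoint A = A :=
    ContinuousLinearMap.isSelfAdjoint_iff'.mp hA.isSelfAdjoint
  letI c : PreInnerProductSpace.Core ℂ H :=
  { inner := fun x y => ⟪A x, y⟫_ℂ
    conj_inner_symm := fun x y => by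
      calc (starRingEnd ℂ) ⟪A y, x⟫_ℂ = ⟪x, A y⟫_ℂ := by rw [inner_conj_symm]
        _ = ⟪ContinuousLinearMap.adjoint A x, y⟫_ℂ :=
            (ContinuousLinearMap.adjoint_inner_left A y x).symm
        _ = ⟪A x, y⟫_ℂ := by rw [hadj]
    re_inner_nonneg := fun x => hA.re_inner_nonneg_left x
    add_left := fun x y z => by simp [inner_add_left]
    smul_left := fun x y r => by simp [inner_smul_left, mul_comm] }
  have he' : RCLike.re (@inner ℂ H c.toInner e e) = 1 := by
    have h0 : (0 : ℝ) ≤ (⟪A e, e⟫_ℂ).re := hA.re_inner_nonneg_left e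
    have := congrArg (· ^ 2) he
    simp [Real.sq_sqrt h0] at this; exact this
  exact buzano_core (c := c) a b e he'
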